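/- Let G be a finite group, H a complex Hilbert space, and φ : ℂ[G] → B(H) a linear map of the form φ(u) for u ∈ G, extended linearly. Suppose the operator P̂ := ∑_{u∈G} λ(u) ⊗ φ(u) on ℂ[G] ⊗ H is positive, where λ is the left regular representation. Then φ is completely positive: for all k ≥ 1, f₁,…,f_k ∈ ℂ[G], x₁,…,x_k ∈ H, one has ∑_{i,j=1}^k ⟨φ(f_j* f_i) x_i, x_j⟩ ≥ 0. -/

import Mathlib

noncomputable section

/-- Linear extension of `φ : G → B(H)` to the group algebra `ℂ[G] = (G → ℂ)`:
`φ(f) = ∑_u f(u) • φ(u)`. -/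
def phiExt {G : Type*} [Group G] [Fintype G]
    {H : Type*} [NormedAddCommGroup H] [InnerProductSpace ℂ H] [CompleteSpace H]
    (φ : G → (H →L[ℂ] H)) (f : G → ℂ) : H →L[ℂ] H :=
  ∑ u : G, f u • φ u

/-- The convolution `f* ⋆ g` in `ℂ[G]`, where `f*(u) = conj (f u⁻¹)`:
`(f* ⋆ g)(w) = ∑_a conj (f a⁻¹) * g (a⁻¹ w)`. -/
def starConv {G : Type*} [Group G] [Fintype G] (f g : G → ℂ) : G → ℂ :=
  fun w => ∑ a : G, (starRingEnd ℂ) (f a⁻¹) * g (a⁻¹ * w)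

/-- Let `G` be a finite group, `H` a complex Hilbert space, and
`φ : G → B(H)`, extended linearly to `ℂ[G]`. Suppose the operator
`P̂ = ∑_{u ∈ G} λ(u) ⊗ φ(u)` on `ℂ[G] ⊗ H ≅ ⊕_{g ∈ G} H` is positive, where `λ` is the
left regular representation (so `(P̂ y)(g) = ∑_u φ(u) (y (u⁻¹ g))`). Then `φ` is
completely positive: for all `k ≥ 1`, `f₁, …, f_k ∈ ℂ[G]` and `x₁, …, x_k ∈ H`,
`∑_{i,j} ⟨φ(f_j* f_i) x_i, x_j⟩ ≥ 0`. -/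
theorem completely_positive_of_Phat_positive
    {G : Type*} [Group G] [Fintype G]
    {H : Type*} [NormedAddCommGroup H] [InnerProductSpace ℂ H] [CompleteSpace H]
    (φ : G → (H →L[ℂ] H))
    (hpos : ∀ y : PiLp 2 (fun _ : G => H),
      0 ≤ Complex.re (inner (𝕜 := ℂ)
            (show PiLp 2 (fun _ : G => H) from WithLp.toLp 2 (fun g => ∑ u : G, φ u (y (u⁻¹ * g)))) y) ∧
      Complex.im (inner (𝕜 := ℂ)
            (show PiLp 2 (fun _ : G => H) from WithLp.toLp 2 (fun g => ∑ u : G, φ u (y (u⁻¹ * g)))) y) = 0) :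
    ∀ (k : ℕ), 1 ≤ k → ∀ (f : Fin k → G → ℂ) (x : Fin k → H),
      0 ≤ Complex.re (∑ i : Fin k, ∑ j : Fin k,
            inner (𝕜 := ℂ) ((phiExt φ (starConv (f j) (f i))) (x i)) (x j)) ∧
      Complex.im (∑ i : Fin k, ∑ j : Fin k,
            inner (𝕜 := ℂ) ((phiExt φ (starConv (f j) (f i))) (x i)) (x j)) = 0 := by
  intro k hk f x
  set y : PiLp 2 (fun _ : G => H) := WithLp.toLp 2 (fun g => ∑ i, f i g⁻¹ • x i) with hy
  have key : (∑ i : Fin k, ∑ j : Fin k,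
      inner (𝕜 := ℂ) ((phiExt φ (starConv (f j) (f i))) (x i)) (x j))
      = inner (𝕜 := ℂ)
          (show PiLp 2 (fun _ : G => H) from WithLp.toLp 2 (fun g => ∑ u : G, φ u (y (u⁻¹ * g)))) y := by
    rw [PiLp.inner_apply]
    simp only [hy, PiLp.toLp_apply, phiExt, starConv, ContinuousLinearMap.sum_apply,
      ContinuousLinearMap.smul_apply, sum_inner, inner_sum, inner_smul_left,
      inner_smul_right, map_sum, map_mul, RingHomCompTriple.comp_apply,
      Complex.conj_conj, map_smul, Finset.sum_mul, Finset.mul_sum,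
      mul_inv_rev, inv_inv]
    conv_lhs => enter [2, i, 2, j]; rw [Finset.sum_comm]
    conv_lhs => enter [2, i]; rw [Finset.sum_comm]
    conv_lhs => rw [Finset.sum_comm]
    conv_lhs => enter [2, a]; rw [Finset.sum_comm]
    conv_lhs => enter [2, a, 2, j]; rw [Finset.sum_comm]
    simp [mul_assoc]
  rw [key]
  exact hpos y

end
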